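/- (Equality of the NTW interpolant and its affine relative.) Let K be a nondegenerate triangle with vertices a₁, a₂, a₃ ∈ ℝ². For every continuously differentiable function v : ℝ² → ℝ, the NTW interpolant and its affine relative coincide: Σ_{i=1}^{3} [ v(a_i) φ_i + v(b_i) χ_i + (⨍_{e_i} n_i·∇v) ψ_i ] = Σ_{i=1}^{3} [ v(a_i) φ̃_i + v(b_i) χ_i + (⨍_{e_i} m_i·∇v) ψ̃_i ] as functions on ℝ². -/

import Mathlib

open RealInnerProductSpace MeasureTheory

noncomputable section

/-- Barycentric coordinate `λ_i(x) = c_i + ⟪g_i, x⟫` (with constant gradient `g_i`). -/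
def lam (g : Fin 3 → EuclideanSpace ℝ (Fin 2)) (c : Fin 3 → ℝ) (i : Fin 3)
    (x : EuclideanSpace ℝ (Fin 2)) : ℝ := c i + ⟪g i, x⟫

/-- Cubic bubble `b_K = λ₁ λ₂ λ₃`. -/
def bub (g : Fin 3 → EuclideanSpace ℝ (Fin 2)) (c : Fin 3 → ℝ)
    (x : EuclideanSpace ℝ (Fin 2)) : ℝ :=
  lam g c 0 x * lam g c 1 x * lam g c 2 x

/-- NTW vertex basis function
`φ_i = λ_i(2λ_i − 1) − 6 b_K (2λ_i − 1) + 6 b_K Σ_{j≠i} ((∇λ_i·∇λ_j)/‖∇λ_j‖²)(2λ_j − 1)`. -/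
def phi (g : Fin 3 → EuclideanSpace ℝ (Fin 2)) (c : Fin 3 → ℝ) (i : Fin 3)
    (x : EuclideanSpace ℝ (Fin 2)) : ℝ :=
  lam g c i x * (2 * lam g c i x - 1) - 6 * bub g c x * (2 * lam g c i x - 1)
    + 6 * bub g c x *
      ∑ j ∈ Finset.univ.erase i, (⟪g i, g j⟫ / ‖g j‖ ^ 2) * (2 * lam g c j x - 1)

/-- NTW midpoint basis function `χ_i = 4 λ_j λ_k + 12 b_K (1 − 4λ_i)`. -/
def chi (g : Fin 3 → EuclideanSpace ℝ (Fin 2)) (c : Fin 3 → ℝ) (i : Fin 3)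
    (x : EuclideanSpace ℝ (Fin 2)) : ℝ :=
  4 * lam g c (i + 1) x * lam g c (i + 2) x + 12 * bub g c x * (1 - 4 * lam g c i x)

/-- NTW normal-moment basis function `ψ_i = 6 b_K (2λ_i − 1)/‖∇λ_i‖`. -/
def psi (g : Fin 3 → EuclideanSpace ℝ (Fin 2)) (c : Fin 3 → ℝ) (i : Fin 3)
    (x : EuclideanSpace ℝ (Fin 2)) : ℝ :=
  6 * bub g c x * (2 * lam g c i x - 1) / ‖g i‖

/-- Affine relative `φ̃_i = λ_i(2λ_i − 1) + 6 b_K (1 − λ_i)`. -/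
def phiT (g : Fin 3 → EuclideanSpace ℝ (Fin 2)) (c : Fin 3 → ℝ) (i : Fin 3)
    (x : EuclideanSpace ℝ (Fin 2)) : ℝ :=
  lam g c i x * (2 * lam g c i x - 1) + 6 * bub g c x * (1 - lam g c i x)

/-- Affine relative `ψ̃_i = 6 b_K (2λ_i − 1)`. -/
def psiT (g : Fin 3 → EuclideanSpace ℝ (Fin 2)) (c : Fin 3 → ℝ) (i : Fin 3)
    (x : EuclideanSpace ℝ (Fin 2)) : ℝ :=
  6 * bub g c x * (2 * lam g c i x - 1)

/-- Midpoint `b_i = (a_j + a_k)/2` of the edge `e_i` opposite the vertex `a_i`. -/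
def emid (a : Fin 3 → EuclideanSpace ℝ (Fin 2)) (i : Fin 3) : EuclideanSpace ℝ (Fin 2) :=
  (1 / 2 : ℝ) • (a (i + 1) + a (i + 2))

/-- Edge average `⨍_{e_i} f = ∫₀¹ f(a_j + t(a_k − a_j)) dt`. -/
def edgeAvg (a : Fin 3 → EuclideanSpace ℝ (Fin 2)) (i : Fin 3)
    (f : EuclideanSpace ℝ (Fin 2) → ℝ) : ℝ :=
  ∫ t in (0 : ℝ)..1, f (a (i + 1) + t • (a (i + 2) - a (i + 1)))

/-- Outward unit normal `n_i = −∇λ_i/‖∇λ_i‖` of the edge `e_i`. -/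
def nvec (g : Fin 3 → EuclideanSpace ℝ (Fin 2)) (i : Fin 3) : EuclideanSpace ℝ (Fin 2) :=
  -(‖g i‖⁻¹ • g i)

private lemma key_aux (p q w u d : EuclideanSpace ℝ (Fin 2))
    (hpw : ⟪p, w⟫ = 1) (hpu : ⟪p, u⟫ = 0) (hqw : ⟪q, w⟫ = 0) (hqu : ⟪q, u⟫ = 1)
    (hdp : ⟪p, d⟫ = 0) (hdq : ⟪q, d⟫ = 0) : d = 0 := by
  let L : EuclideanSpace ℝ (Fin 2) →ₗ[ℝ] ℝ × ℝ :=
    LinearMap.prod ((innerSL ℝ p).toLinearMap) ((innerSL ℝ q).toLinearMap)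
  have hLapp : ∀ x, L x = (⟪p, x⟫, ⟪q, x⟫) := fun x => rfl
  have hsurj : Function.Surjective L := by
    intro z
    refine ⟨z.1 • w + z.2 • u, ?_⟩
    rw [hLapp]
    have e1 : ⟪p, z.1 • w + z.2 • u⟫ = z.1 := by
      rw [inner_add_right, real_inner_smul_right, real_inner_smul_right, hpw, hpu]; ring
    have e2 : ⟪q, z.1 • w + z.2 • u⟫ = z.2 := by
      rw [inner_add_right, real_inner_smul_right, real_inner_smul_right, hqw, hqu]; ring
    rw [e1, e2]
  have hinj : Function.Injective L :=
    (LinearMap.injective_iff_surjective_of_finrank_eq_finrank (by simp)).2 hsurj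
  have h0 : L d = L 0 := by rw [hLapp, hdp, hdq, map_zero]; rfl
  exact hinj h0

private lemma ftc_aux (v : EuclideanSpace ℝ (Fin 2) → ℝ) (hv : ContDiff ℝ 1 v)
    (p d : EuclideanSpace ℝ (Fin 2)) :
    ∫ t in (0:ℝ)..1, fderiv ℝ v (p + t • d) d = v (p + d) - v p := by
  have hder : ∀ t : ℝ, HasDerivAt (fun s : ℝ => v (p + s • d)) (fderiv ℝ v (p + t • d) d) t := by
    intro t
    have h1 : HasDerivAt (fun s : ℝ => p + s • d) d t := by
      simpa using ((hasDerivAt_id t).smul_const d).const_add p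
    exact ((hv.differentiable one_ne_zero (p + t • d)).hasFDerivAt).comp_hasDerivAt t h1
  have hcont : Continuous fun t : ℝ => fderiv ℝ v (p + t • d) d := by
    have h1 : Continuous (fderiv ℝ v) := hv.continuous_fderiv one_ne_zero
    have h2 : Continuous fun t : ℝ => p + t • d := by continuity
    exact (h1.comp h2).clm_apply continuous_const
  have := intervalIntegral.integral_eq_sub_of_hasDerivAt (a := (0:ℝ)) (b := 1)
    (fun t _ => hder t) (hcont.intervalIntegrable 0 1)
  simpa using this

private lemma cont_aux (v : EuclideanSpace ℝ (Fin 2) → ℝ) (hv : ContDiff ℝ 1 v)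
    (p e z : EuclideanSpace ℝ (Fin 2)) :
    Continuous fun t : ℝ => fderiv ℝ v (p + t • e) z := by
  have h1 : Continuous (fderiv ℝ v) := hv.continuous_fderiv one_ne_zero
  have h2 : Continuous fun t : ℝ => p + t • e := by continuity
  exact (h1.comp h2).clm_apply continuous_const

private lemma int_smul_aux (v : EuclideanSpace ℝ (Fin 2) → ℝ)
    (p e z : EuclideanSpace ℝ (Fin 2)) (α : ℝ) :
    ∫ t in (0:ℝ)..1, fderiv ℝ v (p + t • e) (α • z)
      = α * ∫ t in (0:ℝ)..1, fderiv ℝ v (p + t • e) z := by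
  rw [← intervalIntegral.integral_const_mul]
  apply intervalIntegral.integral_congr
  intro t _
  simp

private lemma int_comb_aux (v : EuclideanSpace ℝ (Fin 2) → ℝ) (hv : ContDiff ℝ 1 v)
    (p e z₁ z₂ : EuclideanSpace ℝ (Fin 2)) (α β : ℝ) :
    ∫ t in (0:ℝ)..1, fderiv ℝ v (p + t • e) (α • z₁ + β • z₂)
      = α * (∫ t in (0:ℝ)..1, fderiv ℝ v (p + t • e) z₁)
        + β * (∫ t in (0:ℝ)..1, fderiv ℝ v (p + t • e) z₂) := by
  have h1 : IntervalIntegrable (fun t : ℝ => fderiv ℝ v (p + t • e) z₁) volume 0 1 :=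
    (cont_aux v hv p e z₁).intervalIntegrable 0 1
  have h2 : IntervalIntegrable (fun t : ℝ => fderiv ℝ v (p + t • e) z₂) volume 0 1 :=
    (cont_aux v hv p e z₂).intervalIntegrable 0 1
  rw [← intervalIntegral.integral_const_mul, ← intervalIntegral.integral_const_mul,
    ← intervalIntegral.integral_add (h1.const_mul α) (h2.const_mul β)]
  apply intervalIntegral.integral_congr
  intro t _
  simp

private lemma small_aux (La Lb Lc p p' q s : ℝ) (hq : q ≠ 0) (hrel : q = -(p + p'))
    (hL : La + Lb + Lc = 1) :
    -(2*Lc-1) + (p/q)*(2*La-1) + s*(2*Lb-1)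
      = (1 - Lc) + (1/2 + s)*(2*Lb-1) - (1/2 + p'/q)*(2*La-1) := by
  have h : p/q = -1 - p'/q := by
    field_simp
    linarith
  rw [h]
  linear_combination (-1 : ℝ) * hL

set_option maxHeartbeats 2000000 in
/-- Equality of the NTW interpolant and its affine relative: for a nondegenerate triangle
with vertices `a₁, a₂, a₃` and every `C¹` function `v : ℝ² → ℝ`,
`Σ_i [v(a_i) φ_i + v(b_i) χ_i + (⨍_{e_i} n_i·∇v) ψ_i]
  = Σ_i [v(a_i) φ̃_i + v(b_i) χ_i + (⨍_{e_i} m_i·∇v) ψ̃_i]` with `m_i = b_i − a_i`. -/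
theorem ntw_interpolant_eq_affine_relative
    (a g : Fin 3 → EuclideanSpace ℝ (Fin 2)) (c : Fin 3 → ℝ)
    (hind : AffineIndependent ℝ a)
    (hlam : ∀ i m : Fin 3, lam g c i (a m) = if i = m then 1 else 0)
    (v : EuclideanSpace ℝ (Fin 2) → ℝ) (hv : ContDiff ℝ 1 v) :
    ∀ x : EuclideanSpace ℝ (Fin 2),
      ∑ i : Fin 3, (v (a i) * phi g c i x + v (emid a i) * chi g c i x
          + edgeAvg a i (fun y => fderiv ℝ v y (nvec g i)) * psi g c i x)
        = ∑ i : Fin 3, (v (a i) * phiT g c i x + v (emid a i) * chi g c i x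
          + edgeAvg a i (fun y => fderiv ℝ v y (emid a i - a i)) * psiT g c i x) := by
  intro x
  have hva : ∀ i m : Fin 3, ⟪g i, a m⟫ = (if i = m then 1 else 0) - c i := by
    intro i m; have := hlam i m; simp only [lam] at this; linarith
  have haE : ∀ m : Fin 3, ⟪a m, g m⟫ = 1 - c m := by
    intro m; rw [real_inner_comm, hva, if_pos rfl]
  have haN : ∀ i m : Fin 3, i ≠ m → ⟪a m, g i⟫ = - c i := by
    intro i m h; rw [real_inner_comm, hva, if_neg h]; ring
  have hgE : ∀ m : Fin 3, ⟪g m, a m⟫ = 1 - c m := by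
    intro m; rw [hva, if_pos rfl]
  have hgN : ∀ i m : Fin 3, i ≠ m → ⟪g i, a m⟫ = - c i := by
    intro i m h; rw [hva, if_neg h]; ring
  have hg : g 0 + g 1 + g 2 = 0 := by
    apply key_aux (a 1 - a 0) (a 2 - a 0) (g 1) (g 2) <;>
      simp only [inner_sub_left, inner_add_right, haE, haN 0 1 (by decide), haN 0 2 (by decide),
        haN 0 0, haN 1 0 (by decide), haN 1 2 (by decide), haN 2 0 (by decide),
        haN 2 1 (by decide)] <;> ring
  have hR : ∀ i : Fin 3, ⟪g 0, g i⟫ + ⟪g 1, g i⟫ + ⟪g 2, g i⟫ = 0 := by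
    intro i
    have := congrArg (fun z => (⟪z, g i⟫ : ℝ)) hg
    simpa [inner_add_left] using this
  have hgnz : ∀ i : Fin 3, g i ≠ 0 := by
    intro i h
    have h1 := hgE i
    rw [h, inner_zero_left] at h1
    have h2 := hgN i (i+1) (by omega)
    rw [h, inner_zero_left] at h2
    linarith
  have hQ : ∀ i : Fin 3, ⟪g i, g i⟫ ≠ 0 := fun i => inner_self_ne_zero.2 (hgnz i)
  have hR0 : ⟪g 0, g 0⟫ + ⟪g 0, g 1⟫ + ⟪g 0, g 2⟫ = 0 := by
    have := hR 0
    rwa [real_inner_comm (g 0) (g 1), real_inner_comm (g 0) (g 2)] at this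
  have hR1 : ⟪g 0, g 1⟫ + ⟪g 1, g 1⟫ + ⟪g 1, g 2⟫ = 0 := by
    have := hR 1
    rwa [real_inner_comm (g 1) (g 2)] at this
  have hR2 : ⟪g 0, g 2⟫ + ⟪g 1, g 2⟫ + ⟪g 2, g 2⟫ = 0 := hR 2
  have hm0 : emid a 0 - a 0 = (-(⟪g 0, g 0⟫)⁻¹) • g 0
      + (1/2 + ⟪g 0, g 2⟫ / ⟪g 0, g 0⟫) • (a 2 - a 1) := by
    have hd := key_aux (g 1) (g 2) (a 1 - a 0) (a 2 - a 0)
      ((emid a 0 - a 0) - ((-(⟪g 0, g 0⟫)⁻¹) • g 0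
        + (1/2 + ⟪g 0, g 2⟫ / ⟪g 0, g 0⟫) • (a 2 - a 1)))
      ?_ ?_ ?_ ?_ ?_ ?_
    · exact sub_eq_zero.mp hd
    · simp only [inner_sub_right, hgE, hgN 1 0 (by decide)]; ring
    · simp only [inner_sub_right, hgN 1 2 (by decide), hgN 1 0 (by decide)]; ring
    · simp only [inner_sub_right, hgE, hgN 2 1 (by decide), hgN 2 0 (by decide)]; ring
    · simp only [inner_sub_right, hgE, hgN 2 0 (by decide)]; ring
    · simp only [emid, inner_sub_right, inner_add_right, real_inner_smul_right,
        show (0:Fin 3)+1 = 1 from rfl, show (0:Fin 3)+2 = 2 from rfl,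
        hgE, hgN 1 0 (by decide), hgN 1 2 (by decide)]
      rw [real_inner_comm (g 0) (g 1)]
      set q00 : ℝ := ⟪g 0, g 0⟫ with hq00
      set q01 : ℝ := ⟪g 0, g 1⟫ with hq01
      set q02 : ℝ := ⟪g 0, g 2⟫ with hq02
      have hne : q00 ≠ 0 := hQ 0
      have hrel : q00 + q01 + q02 = 0 := hR0
      field_simp
      linear_combination 2 * hrel
    · simp only [emid, inner_sub_right, inner_add_right, real_inner_smul_right,
        show (0:Fin 3)+1 = 1 from rfl, show (0:Fin 3)+2 = 2 from rfl,
        hgE, hgN 2 0 (by decide), hgN 2 1 (by decide)]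
      rw [real_inner_comm (g 0) (g 2)]
      set q00 : ℝ := ⟪g 0, g 0⟫ with hq00
      set q01 : ℝ := ⟪g 0, g 1⟫ with hq01
      set q02 : ℝ := ⟪g 0, g 2⟫ with hq02
      have hne : q00 ≠ 0 := hQ 0
      have hrel : q00 + q01 + q02 = 0 := hR0
      field_simp
      linear_combination
  have hm1 : emid a 1 - a 1 = (-(⟪g 1, g 1⟫)⁻¹) • g 1
      + (1/2 + ⟪g 0, g 1⟫ / ⟪g 1, g 1⟫) • (a 0 - a 2) := by
    have hd := key_aux (g 2) (g 0) (a 2 - a 1) (a 0 - a 1)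
      ((emid a 1 - a 1) - ((-(⟪g 1, g 1⟫)⁻¹) • g 1
        + (1/2 + ⟪g 0, g 1⟫ / ⟪g 1, g 1⟫) • (a 0 - a 2)))
      ?_ ?_ ?_ ?_ ?_ ?_
    · exact sub_eq_zero.mp hd
    · simp only [inner_sub_right, hgE, hgN 2 1 (by decide)]; ring
    · simp only [inner_sub_right, hgN 2 0 (by decide), hgN 2 1 (by decide)]; ring
    · simp only [inner_sub_right, hgE, hgN 0 2 (by decide), hgN 0 1 (by decide)]; ring
    · simp only [inner_sub_right, hgE, hgN 0 1 (by decide)]; ring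
    · simp only [emid, inner_sub_right, inner_add_right, real_inner_smul_right,
        show (1:Fin 3)+1 = 2 from rfl, show (1:Fin 3)+2 = 0 from rfl,
        hgE, hgN 2 1 (by decide), hgN 2 0 (by decide)]
      rw [real_inner_comm (g 1) (g 2)]
      set q11 : ℝ := ⟪g 1, g 1⟫ with hq11
      set q01 : ℝ := ⟪g 0, g 1⟫ with hq01
      set q12 : ℝ := ⟪g 1, g 2⟫ with hq12
      have hne : q11 ≠ 0 := hQ 1
      have hrel : q01 + q11 + q12 = 0 := hR1
      field_simp
      linear_combination 2 * hrel
    · simp only [emid, inner_sub_right, inner_add_right, real_inner_smul_right,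
        show (1:Fin 3)+1 = 2 from rfl, show (1:Fin 3)+2 = 0 from rfl,
        hgE, hgN 0 1 (by decide), hgN 0 2 (by decide)]
      set q11 : ℝ := ⟪g 1, g 1⟫ with hq11
      set q01 : ℝ := ⟪g 0, g 1⟫ with hq01
      set q12 : ℝ := ⟪g 1, g 2⟫ with hq12
      have hne : q11 ≠ 0 := hQ 1
      have hrel : q01 + q11 + q12 = 0 := hR1
      field_simp
      linear_combination
  have hm2 : emid a 2 - a 2 = (-(⟪g 2, g 2⟫)⁻¹) • g 2
      + (1/2 + ⟪g 1, g 2⟫ / ⟪g 2, g 2⟫) • (a 1 - a 0) := by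
    have hd := key_aux (g 0) (g 1) (a 0 - a 2) (a 1 - a 2)
      ((emid a 2 - a 2) - ((-(⟪g 2, g 2⟫)⁻¹) • g 2
        + (1/2 + ⟪g 1, g 2⟫ / ⟪g 2, g 2⟫) • (a 1 - a 0)))
      ?_ ?_ ?_ ?_ ?_ ?_
    · exact sub_eq_zero.mp hd
    · simp only [inner_sub_right, hgE, hgN 0 2 (by decide)]; ring
    · simp only [inner_sub_right, hgN 0 1 (by decide), hgN 0 2 (by decide)]; ring
    · simp only [inner_sub_right, hgE, hgN 1 0 (by decide), hgN 1 2 (by decide)]; ring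
    · simp only [inner_sub_right, hgE, hgN 1 2 (by decide)]; ring
    · simp only [emid, inner_sub_right, inner_add_right, real_inner_smul_right,
        show (2:Fin 3)+1 = 0 from rfl, show (2:Fin 3)+2 = 1 from rfl,
        hgE, hgN 0 2 (by decide), hgN 0 1 (by decide)]
      set q22 : ℝ := ⟪g 2, g 2⟫ with hq22
      set q02 : ℝ := ⟪g 0, g 2⟫ with hq02
      set q12 : ℝ := ⟪g 1, g 2⟫ with hq12
      have hne : q22 ≠ 0 := hQ 2
      have hrel : q02 + q12 + q22 = 0 := hR2
      field_simp
      linear_combination 2 * hrel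
    · simp only [emid, inner_sub_right, inner_add_right, real_inner_smul_right,
        show (2:Fin 3)+1 = 0 from rfl, show (2:Fin 3)+2 = 1 from rfl,
        hgE, hgN 1 2 (by decide), hgN 1 0 (by decide)]
      set q22 : ℝ := ⟪g 2, g 2⟫ with hq22
      set q02 : ℝ := ⟪g 0, g 2⟫ with hq02
      set q12 : ℝ := ⟪g 1, g 2⟫ with hq12
      have hne : q22 ≠ 0 := hQ 2
      have hrel : q02 + q12 + q22 = 0 := hR2
      field_simp
      linear_combination
  -- edge integrals
  set A0 : ℝ := ∫ t in (0:ℝ)..1, fderiv ℝ v (a 1 + t • (a 2 - a 1)) (g 0) with hA0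
  set A1 : ℝ := ∫ t in (0:ℝ)..1, fderiv ℝ v (a 2 + t • (a 0 - a 2)) (g 1) with hA1
  set A2 : ℝ := ∫ t in (0:ℝ)..1, fderiv ℝ v (a 0 + t • (a 1 - a 0)) (g 2) with hA2
  have hE0L : edgeAvg a 0 (fun y => fderiv ℝ v y (nvec g 0)) = -(‖g 0‖⁻¹ * A0) := by
    simp only [edgeAvg, show (0:Fin 3)+1 = 1 from rfl, show (0:Fin 3)+2 = 2 from rfl,
      show nvec g 0 = (-(‖g 0‖⁻¹)) • g 0 from by rw [nvec, neg_smul]]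
    rw [int_smul_aux v (a 1) (a 2 - a 1) (g 0) (-(‖g 0‖⁻¹)), hA0]; ring
  have hE1L : edgeAvg a 1 (fun y => fderiv ℝ v y (nvec g 1)) = -(‖g 1‖⁻¹ * A1) := by
    simp only [edgeAvg, show (1:Fin 3)+1 = 2 from rfl, show (1:Fin 3)+2 = 0 from rfl,
      show nvec g 1 = (-(‖g 1‖⁻¹)) • g 1 from by rw [nvec, neg_smul]]
    rw [int_smul_aux v (a 2) (a 0 - a 2) (g 1) (-(‖g 1‖⁻¹)), hA1]; ring
  have hE2L : edgeAvg a 2 (fun y => fderiv ℝ v y (nvec g 2)) = -(‖g 2‖⁻¹ * A2) := by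
    simp only [edgeAvg, show (2:Fin 3)+1 = 0 from rfl, show (2:Fin 3)+2 = 1 from rfl,
      show nvec g 2 = (-(‖g 2‖⁻¹)) • g 2 from by rw [nvec, neg_smul]]
    rw [int_smul_aux v (a 0) (a 1 - a 0) (g 2) (-(‖g 2‖⁻¹)), hA2]; ring
  have hE0R : edgeAvg a 0 (fun y => fderiv ℝ v y (emid a 0 - a 0))
      = -(⟪g 0, g 0⟫)⁻¹ * A0 + (1/2 + ⟪g 0, g 2⟫ / ⟪g 0, g 0⟫) * (v (a 2) - v (a 1)) := by
    simp only [edgeAvg, show (0:Fin 3)+1 = 1 from rfl, show (0:Fin 3)+2 = 2 from rfl, hm0]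
    rw [int_comb_aux v hv (a 1) (a 2 - a 1) (g 0) (a 2 - a 1) _ _,
      ftc_aux v hv (a 1) (a 2 - a 1), show a 1 + (a 2 - a 1) = a 2 from by abel, hA0]
  have hE1R : edgeAvg a 1 (fun y => fderiv ℝ v y (emid a 1 - a 1))
      = -(⟪g 1, g 1⟫)⁻¹ * A1 + (1/2 + ⟪g 0, g 1⟫ / ⟪g 1, g 1⟫) * (v (a 0) - v (a 2)) := by
    simp only [edgeAvg, show (1:Fin 3)+1 = 2 from rfl, show (1:Fin 3)+2 = 0 from rfl, hm1]
    rw [int_comb_aux v hv (a 2) (a 0 - a 2) (g 1) (a 0 - a 2) _ _,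
      ftc_aux v hv (a 2) (a 0 - a 2), show a 2 + (a 0 - a 2) = a 0 from by abel, hA1]
  have hE2R : edgeAvg a 2 (fun y => fderiv ℝ v y (emid a 2 - a 2))
      = -(⟪g 2, g 2⟫)⁻¹ * A2 + (1/2 + ⟪g 1, g 2⟫ / ⟪g 2, g 2⟫) * (v (a 1) - v (a 0)) := by
    simp only [edgeAvg, show (2:Fin 3)+1 = 0 from rfl, show (2:Fin 3)+2 = 1 from rfl, hm2]
    rw [int_comb_aux v hv (a 0) (a 1 - a 0) (g 2) (a 1 - a 0) _ _,
      ftc_aux v hv (a 0) (a 1 - a 0), show a 0 + (a 1 - a 0) = a 1 from by abel, hA2]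
  have hP0 : -(‖g 0‖⁻¹ * A0) * psi g c 0 x
      = -(A0 * (6 * bub g c x * (2 * lam g c 0 x - 1)) / ⟪g 0, g 0⟫) := by
    rw [psi, real_inner_self_eq_norm_mul_norm]
    have h : ‖g 0‖ ≠ 0 := norm_ne_zero_iff.2 (hgnz 0)
    field_simp
  have hP1 : -(‖g 1‖⁻¹ * A1) * psi g c 1 x
      = -(A1 * (6 * bub g c x * (2 * lam g c 1 x - 1)) / ⟪g 1, g 1⟫) := by
    rw [psi, real_inner_self_eq_norm_mul_norm]
    have h : ‖g 1‖ ≠ 0 := norm_ne_zero_iff.2 (hgnz 1)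
    field_simp
  have hP2 : -(‖g 2‖⁻¹ * A2) * psi g c 2 x
      = -(A2 * (6 * bub g c x * (2 * lam g c 2 x - 1)) / ⟪g 2, g 2⟫) := by
    rw [psi, real_inner_self_eq_norm_mul_norm]
    have h : ‖g 2‖ ≠ 0 := norm_ne_zero_iff.2 (hgnz 2)
    field_simp
  have hsumlam : lam g c 0 x + lam g c 1 x + lam g c 2 x = 1 := by
    have h1 := congrArg (fun z => (⟪z, x⟫ : ℝ)) hg
    have h2 : ⟪g 0, x⟫ + ⟪g 1, x⟫ + ⟪g 2, x⟫ = 0 := by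
      simpa [inner_add_left] using h1
    have h3 := congrArg (fun z => (⟪z, a 0⟫ : ℝ)) hg
    have h4 : ⟪g 0, a 0⟫ + ⟪g 1, a 0⟫ + ⟪g 2, a 0⟫ = 0 := by
      simpa [inner_add_left] using h3
    have h5 := hgE 0
    have h6 := hgN 1 0 (by decide)
    have h7 := hgN 2 0 (by decide)
    simp only [lam]
    linarith
  -- assemble
  simp only [Fin.sum_univ_three]
  rw [hE0L, hE1L, hE2L, hE0R, hE1R, hE2R, hP0, hP1, hP2]
  simp only [phi, phiT, psiT, bub]
  rw [show (Finset.univ.erase (0:Fin 3)) = {1,2} from by decide,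
    show (Finset.univ.erase (1:Fin 3)) = {0,2} from by decide,
    show (Finset.univ.erase (2:Fin 3)) = {0,1} from by decide,
    Finset.sum_pair (show (1:Fin 3) ≠ 2 from by decide),
    Finset.sum_pair (show (0:Fin 3) ≠ 2 from by decide),
    Finset.sum_pair (show (0:Fin 3) ≠ 1 from by decide)]
  simp only [← real_inner_self_eq_norm_sq]
  rw [real_inner_comm (g 0) (g 1), real_inner_comm (g 0) (g 2), real_inner_comm (g 1) (g 2)]
  set L0 : ℝ := lam g c 0 x with hL0
  set L1 : ℝ := lam g c 1 x with hL1
  set L2 : ℝ := lam g c 2 x with hL2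
  set q00 : ℝ := ⟪g 0, g 0⟫ with hq00
  set q11 : ℝ := ⟪g 1, g 1⟫ with hq11
  set q22 : ℝ := ⟪g 2, g 2⟫ with hq22
  set q01 : ℝ := ⟪g 0, g 1⟫ with hq01
  set q02 : ℝ := ⟪g 0, g 2⟫ with hq02
  set q12 : ℝ := ⟪g 1, g 2⟫ with hq12
  have hne0 : q00 ≠ 0 := hQ 0
  have hne1 : q11 ≠ 0 := hQ 1
  have hne2 : q22 ≠ 0 := hQ 2
  have hrel0 : q00 = -(q01 + q02) := by rw [hq00, hq01, hq02]; linarith [hR0]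
  have hrel1 : q11 = -(q01 + q12) := by rw [hq11, hq01, hq12]; linarith [hR1]
  have hrel2 : q22 = -(q02 + q12) := by rw [hq22, hq02, hq12]; linarith [hR2]
  have hLrel : L2 = 1 - L0 - L1 := by rw [hL2, hL0, hL1]; linarith [hsumlam]
  linear_combination (v (a 0) * (6*(L0*L1*L2))) *
      small_aux L2 L1 L0 q02 q12 q22 (q01/q11) hne2 hrel2 (by linarith [hsumlam])
    + (v (a 1) * (6*(L0*L1*L2))) *
      small_aux L0 L2 L1 q01 q02 q00 (q12/q22) hne0 hrel0 (by linarith [hsumlam])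
    + (v (a 2) * (6*(L0*L1*L2))) *
      small_aux L1 L0 L2 q12 q01 q11 (q02/q00) hne1 (by linarith [hrel1]) (by linarith [hsumlam])
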